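/- Let B ⊆ ℝ be a set that is not Marczewski null, witnessed by a perfect set P such that every perfect subset of P meets B. Suppose B = ⋃_{α∈Λ} A_α is a union of at least two pairwise disjoint nonempty s₀-sets. Then Λ can be split into disjoint nonempty subfamilies Λ₀, Λ₁ and there exist disjoint perfect sets P₀, P₁ ⊆ P such that every perfect subset of P₀ meets ⋃_{α∈Λ₀} A_α and every perfect subset of P₁ meets ⋃_{α∈Λ₁} A_α. -/

import Mathlib

/-- A set is Marczewski null (`s₀`) if every nonempty perfect set contains a nonempty
perfect subset disjoint from it. -/
def MarczewskiNull (S : Set ℝ) : Prop :=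
  ∀ P : Set ℝ, Perfect P → P.Nonempty →
    ∃ Q : Set ℝ, Q ⊆ P ∧ Perfect Q ∧ Q.Nonempty ∧ Q ∩ S = ∅

namespace S0Aux

open Set Topology
open scoped ENNReal

variable {Λ : Type*}

/-- `Abund A R S` : every nonempty perfect subset of `R` meets `⋃ α ∈ S, A α`. -/
def Abund (A : Λ → Set ℝ) (R : Set ℝ) (S : Set Λ) : Prop :=
  ∀ X : Set ℝ, X ⊆ R → Perfect X → X.Nonempty → (X ∩ ⋃ α ∈ S, A α).Nonempty

/-- `SmallIn A R S` : no nonempty perfect subset of `R` is abundant for `S`. -/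
def SmallIn (A : Λ → Set ℝ) (R : Set ℝ) (S : Set Λ) : Prop :=
  ∀ X : Set ℝ, X ⊆ R → Perfect X → X.Nonempty → ¬ Abund A X S

lemma Abund.mono {A : Λ → Set ℝ} {R : Set ℝ} {S S' : Set Λ} (h : S ⊆ S') (hab : Abund A R S) :
    Abund A R S' := by
  intro X hX h1 h2
  obtain ⟨y, hy1, hy2⟩ := hab X hX h1 h2
  refine ⟨y, hy1, ?_⟩
  simp only [mem_iUnion, exists_prop] at hy2 ⊢
  obtain ⟨a, ha, hy⟩ := hy2
  exact ⟨a, h ha, hy⟩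

lemma SmallIn.mono {A : Λ → Set ℝ} {R : Set ℝ} {S S' : Set Λ} (h : S' ⊆ S)
    (hs : SmallIn A R S) : SmallIn A R S' :=
  fun X hX h1 h2 hab => hs X hX h1 h2 (hab.mono h)

lemma SmallIn.union {A : Λ → Set ℝ} {R : Set ℝ} {S S' : Set Λ} (h1 : SmallIn A R S)
    (h2 : SmallIn A R S') : SmallIn A R (S ∪ S') := by
  intro X hXR hX hXne hab
  have hnab : ¬ Abund A X S' := h2 X hXR hX hXne
  rw [Abund] at hnab
  push_neg at hnab
  obtain ⟨X', hsub, hperf, hne', hempty⟩ := hnab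
  refine h1 X' (hsub.trans hXR) hperf hne' ?_
  intro Y hY h3 h4
  obtain ⟨y, hyY, hy⟩ := hab Y (hY.trans hsub) h3 h4
  refine ⟨y, hyY, ?_⟩
  simp only [mem_iUnion, exists_prop] at hy ⊢
  obtain ⟨a, ha, hya⟩ := hy
  rcases ha with ha | ha
  · exact ⟨a, ha, hya⟩
  · exfalso
    have : y ∈ X' ∩ ⋃ α ∈ S', A α :=
      ⟨hY hyY, by simp only [mem_iUnion, exists_prop]; exact ⟨a, ha, hya⟩⟩
    rw [hempty] at this
    exact this

lemma small_singleton {A : Λ → Set ℝ} (hnull : ∀ α, MarczewskiNull (A α)) (R : Set ℝ)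
    (α : Λ) : SmallIn A R {α} := by
  intro X _ hX hXne hab
  obtain ⟨X', hsub, hperf, hne', hdisj⟩ := hnull α X hX hXne
  obtain ⟨y, hy1, hy2⟩ := hab X' hsub hperf hne'
  simp only [mem_iUnion, mem_singleton_iff, exists_prop] at hy2
  obtain ⟨a, rfl, hya⟩ := hy2
  have : y ∈ X' ∩ A a := ⟨hy1, hya⟩
  rw [hdisj] at this
  exact this

/-! ### Fusion: relative s₀-nullity is countably additive -/

section Fusion

variable (Q : Set ℝ) (C : ℕ → Set ℝ)
variable (hQ : Perfect Q) (hQne : Q.Nonempty)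
variable (hsm : ∀ (n : ℕ) (R : Set ℝ), R ⊆ Q → Perfect R → R.Nonempty →
    ∃ R', R' ⊆ R ∧ Perfect R' ∧ R'.Nonempty ∧ R' ∩ C n = ∅)

include hQ hQne in
lemma exists_base : ∃ R : Set ℝ, R ⊆ Q ∧ Perfect R ∧ R.Nonempty ∧
    EMetric.diam R ≤ 2⁻¹ ^ (0 : ℕ) := by
  obtain ⟨C₀, _, ⟨p0, ne0, s0, d0⟩, _, _⟩ :=
    hQ.small_diam_splitting hQne (ε := 2⁻¹ ^ (0 : ℕ)) (by rw [pow_zero]; norm_num)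
  exact ⟨C₀, s0, p0, ne0, d0⟩

include hsm in
lemma exists_pair (n : ℕ) (R : Set ℝ) (h0 : R ⊆ Q) (h1 : Perfect R) (h2 : R.Nonempty) :
    ∃ p : Set ℝ × Set ℝ,
      (p.1 ⊆ R ∧ Perfect p.1 ∧ p.1.Nonempty ∧ p.1 ∩ C n = ∅ ∧
        EMetric.diam p.1 ≤ 2⁻¹ ^ (n + 1)) ∧
      (p.2 ⊆ R ∧ Perfect p.2 ∧ p.2.Nonempty ∧ p.2 ∩ C n = ∅ ∧
        EMetric.diam p.2 ≤ 2⁻¹ ^ (n + 1)) ∧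
      Disjoint p.1 p.2 := by
  obtain ⟨R', hsub, hperf, hne', hC⟩ := hsm n R h0 h1 h2
  have hpos : (0 : ℝ≥0∞) < 2⁻¹ ^ (n + 1) := ENNReal.pow_pos (by norm_num) _
  obtain ⟨C₀, C₁, ⟨p0, ne0, s0, d0⟩, ⟨p1, ne1, s1, d1⟩, hd⟩ :=
    hperf.small_diam_splitting hne' hpos
  refine ⟨(C₀, C₁), ⟨s0.trans hsub, p0, ne0, ?_, d0⟩, ⟨s1.trans hsub, p1, ne1, ?_, d1⟩, hd⟩
  · apply eq_empty_of_subset_empty; rw [← hC]; exact inter_subset_inter_left _ s0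
  · apply eq_empty_of_subset_empty; rw [← hC]; exact inter_subset_inter_left _ s1

open scoped Classical in
noncomputable def pairOf (n : ℕ) (R : Set ℝ) : Set ℝ × Set ℝ :=
  if h : R ⊆ Q ∧ Perfect R ∧ R.Nonempty then
    (exists_pair Q C hsm n R h.1 h.2.1 h.2.2).choose
  else (∅, ∅)

include hsm in
lemma pairOf_spec (n : ℕ) (R : Set ℝ) (h0 : R ⊆ Q) (h1 : Perfect R) (h2 : R.Nonempty) :
    ((pairOf Q C hsm n R).1 ⊆ R ∧ Perfect (pairOf Q C hsm n R).1 ∧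
      (pairOf Q C hsm n R).1.Nonempty ∧ (pairOf Q C hsm n R).1 ∩ C n = ∅ ∧
      EMetric.diam (pairOf Q C hsm n R).1 ≤ 2⁻¹ ^ (n + 1)) ∧
    ((pairOf Q C hsm n R).2 ⊆ R ∧ Perfect (pairOf Q C hsm n R).2 ∧
      (pairOf Q C hsm n R).2.Nonempty ∧ (pairOf Q C hsm n R).2 ∩ C n = ∅ ∧
      EMetric.diam (pairOf Q C hsm n R).2 ≤ 2⁻¹ ^ (n + 1)) ∧
    Disjoint (pairOf Q C hsm n R).1 (pairOf Q C hsm n R).2 := by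
  rw [pairOf, dif_pos ⟨h0, h1, h2⟩]
  exact (exists_pair Q C hsm n R h0 h1 h2).choose_spec

noncomputable def node : List Bool → Set ℝ
  | [] => (exists_base Q hQ hQne).choose
  | b :: s => if b then (pairOf Q C hsm s.length (node s)).2
      else (pairOf Q C hsm s.length (node s)).1

lemma node_spec : ∀ s : List Bool,
    node Q C hQ hQne hsm s ⊆ Q ∧ Perfect (node Q C hQ hQne hsm s) ∧
      (node Q C hQ hQne hsm s).Nonempty ∧
      EMetric.diam (node Q C hQ hQne hsm s) ≤ 2⁻¹ ^ s.length := by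
  intro s
  induction s with
  | nil =>
    obtain ⟨a, b, c, d⟩ := (exists_base Q hQ hQne).choose_spec
    exact ⟨a, b, c, d⟩
  | cons b s ih =>
    have h := pairOf_spec Q C hsm s.length (node Q C hQ hQne hsm s) ih.1 ih.2.1 ih.2.2.1
    cases b
    · show (pairOf Q C hsm s.length (node Q C hQ hQne hsm s)).1 ⊆ Q ∧ _
      exact ⟨h.1.1.trans ih.1, h.1.2.1, h.1.2.2.1, h.1.2.2.2.2⟩
    · show (pairOf Q C hsm s.length (node Q C hQ hQne hsm s)).2 ⊆ Q ∧ _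
      exact ⟨h.2.1.1.trans ih.1, h.2.1.2.1, h.2.1.2.2.1, h.2.1.2.2.2.2⟩

lemma node_cons_spec (b : Bool) (s : List Bool) :
    node Q C hQ hQne hsm (b :: s) ⊆ node Q C hQ hQne hsm s ∧
      node Q C hQ hQne hsm (b :: s) ∩ C s.length = ∅ := by
  have ih := node_spec Q C hQ hQne hsm s
  have h := pairOf_spec Q C hsm s.length (node Q C hQ hQne hsm s) ih.1 ih.2.1 ih.2.2.1
  cases b
  · exact ⟨h.1.1, h.1.2.2.2.1⟩
  · exact ⟨h.2.1.1, h.2.1.2.2.2.1⟩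

lemma node_sib (s : List Bool) :
    Disjoint (node Q C hQ hQne hsm (false :: s)) (node Q C hQ hQne hsm (true :: s)) := by
  have ih := node_spec Q C hQ hQne hsm s
  have h := pairOf_spec Q C hsm s.length (node Q C hQ hQne hsm s) ih.1 ih.2.1 ih.2.2.1
  exact h.2.2

lemma node_drop : ∀ (s : List Bool) (j : ℕ),
    node Q C hQ hQne hsm s ⊆ node Q C hQ hQne hsm (s.drop j) := by
  intro s
  induction s with
  | nil => intro j; simp
  | cons b s ih =>
    intro j
    cases j with
    | zero => simp
    | succ j => exact (node_cons_spec Q C hQ hQne hsm b s).1.trans (ih j)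

lemma node_level_disj : ∀ (s t : List Bool), s.length = t.length → s ≠ t →
    Disjoint (node Q C hQ hQne hsm s) (node Q C hQ hQne hsm t) := by
  intro s
  induction s with
  | nil =>
    intro t h hne
    cases t with
    | nil => exact absurd rfl hne
    | cons c t => simp at h
  | cons b s ih =>
    intro t hlen hne
    cases t with
    | nil => simp at hlen
    | cons c t =>
      simp only [List.length_cons, Nat.add_right_cancel_iff] at hlen
      by_cases hst : s = t
      · subst hst
        have hbc : b ≠ c := fun h => hne (by rw [h])
        cases b <;> cases c <;> first
          | exact absurd rfl hbc
          | exact node_sib Q C hQ hQne hsm s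
          | exact (node_sib Q C hQ hQne hsm s).symm
      · exact (ih t hlen hst).mono (node_cons_spec Q C hQ hQne hsm b s).1
          (node_cons_spec Q C hQ hQne hsm c t).1

/-- level sets of the scheme -/
noncomputable def level (n : ℕ) : Set ℝ :=
  ⋃ s ∈ {s : List Bool | s.length = n}, node Q C hQ hQne hsm s

lemma node_compact (s : List Bool) : IsCompact (node Q C hQ hQne hsm s) := by
  have h := node_spec Q C hQ hQne hsm s
  refine Metric.isCompact_of_isClosed_isBounded h.2.1.closed ?_
  rw [Metric.isBounded_iff_ediam_ne_top]
  intro htop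
  have h2 : Metric.ediam (node Q C hQ hQne hsm s) ≤ 2⁻¹ ^ s.length := h.2.2.2
  rw [htop] at h2
  have : (2⁻¹ : ℝ≥0∞) ^ s.length ≠ ⊤ := by
    apply ENNReal.pow_ne_top
    simp
  exact this (top_le_iff.mp h2)

lemma level_closed (n : ℕ) : IsClosed (level Q C hQ hQne hsm n) :=
  (List.finite_length_eq Bool n).isClosed_biUnion
    (fun s _ => (node_spec Q C hQ hQne hsm s).2.1.closed)

/-- The fusion set -/
noncomputable def fusionSet : Set ℝ := ⋂ n, level Q C hQ hQne hsm n

lemma branch_nonempty (s : List Bool) :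
    (fusionSet Q C hQ hQne hsm ∩ node Q C hQ hQne hsm s).Nonempty := by
  set V : ℕ → Set ℝ := fun k => node Q C hQ hQne hsm (List.replicate k false ++ s) with hV
  have hVsub : ∀ k, V (k + 1) ⊆ V k := by
    intro k
    have heq : List.replicate (k + 1) false ++ s = false :: (List.replicate k false ++ s) := by
      rw [List.replicate_succ, List.cons_append]
    rw [hV]
    simp only
    rw [heq]
    exact (node_cons_spec Q C hQ hQne hsm false _).1
  have hVne : ∀ k, (V k).Nonempty := fun k => (node_spec Q C hQ hQne hsm _).2.2.1
  have hVcl : ∀ k, IsClosed (V k) := fun k => (node_spec Q C hQ hQne hsm _).2.1.closed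
  have hVcp : IsCompact (V 0) := node_compact Q C hQ hQne hsm _
  obtain ⟨x, hx⟩ :=
    IsCompact.nonempty_iInter_of_sequence_nonempty_isCompact_isClosed V hVsub hVne hVcp hVcl
  have hxk : ∀ k, x ∈ V k := by
    intro k; exact mem_iInter.mp hx k
  have hx0 : x ∈ node Q C hQ hQne hsm s := by
    have := hxk 0
    rw [hV] at this
    simpa using this
  refine ⟨x, ⟨?_, hx0⟩⟩
  rw [fusionSet, mem_iInter]
  intro m
  set l : List Bool := List.replicate (m - s.length) false ++ s with hl
  have hlen : l.length = (m - s.length) + s.length := by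
    rw [hl, List.length_append, List.length_replicate]
  have hmle : m ≤ l.length := by omega
  have hx2 : x ∈ node Q C hQ hQne hsm (l.drop (l.length - m)) :=
    node_drop Q C hQ hQne hsm l (l.length - m) (hxk (m - s.length))
  refine mem_biUnion ?_ hx2
  show (l.drop (l.length - m)).length = m
  rw [List.length_drop]
  omega

include hQ hQne hsm in
lemma fusion : ∃ X : Set ℝ, X ⊆ Q ∧ Perfect X ∧ X.Nonempty ∧ ∀ n, X ∩ C n = ∅ := by
  refine ⟨fusionSet Q C hQ hQne hsm, ?_, ⟨?_, ?_⟩, ?_, ?_⟩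
  · -- subset of Q
    intro x hx
    have h0 : x ∈ level Q C hQ hQne hsm 0 := mem_iInter.mp hx 0
    simp only [level, mem_iUnion, exists_prop, mem_setOf_eq] at h0
    obtain ⟨s, hs, hxs⟩ := h0
    rw [List.length_eq_zero_iff] at hs
    subst hs
    exact (node_spec Q C hQ hQne hsm []).1 hxs
  · -- closed
    exact isClosed_iInter (level_closed Q C hQ hQne hsm)
  · -- preperfect
    intro x hx
    rw [accPt_iff_nhds]
    intro U hU
    obtain ⟨ε, hε, hball⟩ := Metric.mem_nhds_iff.mp hU
    obtain ⟨n, hn⟩ :=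
      ENNReal.exists_inv_two_pow_lt (a := ENNReal.ofReal ε) (ENNReal.ofReal_pos.mpr hε).ne'
    have hx1 : x ∈ level Q C hQ hQne hsm (n + 1) := mem_iInter.mp hx (n + 1)
    simp only [level, mem_iUnion, exists_prop, mem_setOf_eq] at hx1
    obtain ⟨s, hs, hxs⟩ := hx1
    cases s with
    | nil => simp at hs
    | cons b s' =>
      have hs' : s'.length = n := by simpa using hs
      obtain ⟨y, hyX, hyn⟩ := branch_nonempty Q C hQ hQne hsm ((!b) :: s')
      have hneq : y ≠ x := by
        intro h
        subst h
        have hd := node_level_disj Q C hQ hQne hsm (b :: s') ((!b) :: s') (by simp)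
          (by cases b <;> simp)
        exact Set.disjoint_left.mp hd hxs hyn
      have hx2 : x ∈ node Q C hQ hQne hsm s' := (node_cons_spec Q C hQ hQne hsm b s').1 hxs
      have hy2 : y ∈ node Q C hQ hQne hsm s' := (node_cons_spec Q C hQ hQne hsm (!b) s').1 hyn
      have hdd : edist y x ≤ EMetric.diam (node Q C hQ hQne hsm s') :=
        EMetric.edist_le_diam_of_mem hy2 hx2
      have hlt : edist y x < ENNReal.ofReal ε := by
        apply lt_of_le_of_lt (hdd.trans ?_) hn
        have := (node_spec Q C hQ hQne hsm s').2.2.2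
        rwa [hs'] at this
      have hdist : dist y x < ε := edist_lt_ofReal.mp hlt
      exact ⟨y, ⟨hball (Metric.mem_ball.mpr hdist), hyX⟩, hneq⟩
  · -- nonempty
    obtain ⟨x, hx1, _⟩ := branch_nonempty Q C hQ hQne hsm []
    exact ⟨x, hx1⟩
  · -- avoids C n
    intro n
    refine eq_empty_iff_forall_notMem.mpr ?_
    rintro x ⟨hxX, hxC⟩
    have hx1 : x ∈ level Q C hQ hQne hsm (n + 1) := mem_iInter.mp hxX (n + 1)
    simp only [level, mem_iUnion, exists_prop, mem_setOf_eq] at hx1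
    obtain ⟨s, hs, hxs⟩ := hx1
    cases s with
    | nil => simp at hs
    | cons b s' =>
      have hs' : s'.length = n := by simpa using hs
      have he := (node_cons_spec Q C hQ hQne hsm b s').2
      rw [hs'] at he
      have : x ∈ node Q C hQ hQne hsm (b :: s') ∩ C n := ⟨hxs, hxC⟩
      rw [he] at this
      exact this

end Fusion

end S0Aux

open S0Aux Set

theorem stmt18 {Λ : Type*} (A : Λ → Set ℝ) (B P : Set ℝ)
    (hB : B = ⋃ α, A α)
    (hP : Perfect P) (hPne : P.Nonempty)
    (hwitness : ∀ Q : Set ℝ, Q ⊆ P → Perfect Q → Q.Nonempty → (Q ∩ B).Nonempty)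
    (hdisj : Pairwise (Function.onFun Disjoint A))
    (hne : ∀ α, (A α).Nonempty)
    (hnull : ∀ α, MarczewskiNull (A α))
    (htwo : ∃ α β : Λ, α ≠ β) :
    ∃ Λ₀ Λ₁ : Set Λ, Disjoint Λ₀ Λ₁ ∧ Λ₀ ∪ Λ₁ = Set.univ ∧
      Λ₀.Nonempty ∧ Λ₁.Nonempty ∧
      ∃ P₀ P₁ : Set ℝ, Disjoint P₀ P₁ ∧ P₀ ⊆ P ∧ P₁ ⊆ P ∧
        Perfect P₀ ∧ P₀.Nonempty ∧ Perfect P₁ ∧ P₁.Nonempty ∧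
        (∀ Q : Set ℝ, Q ⊆ P₀ → Perfect Q → Q.Nonempty → (Q ∩ ⋃ α ∈ Λ₀, A α).Nonempty) ∧
        (∀ Q : Set ℝ, Q ⊆ P₁ → Perfect Q → Q.Nonempty → (Q ∩ ⋃ α ∈ Λ₁, A α).Nonempty) := by
  classical
  by_contra hcon
  obtain ⟨α₀, β₀, hab0⟩ := htwo
  -- Failure implies: no disjoint pair of perfect subsets of P is abundant for
  -- disjoint index sets.
  have key : ∀ (R₀ R₁ : Set ℝ) (S₀ S₁ : Set Λ), Disjoint R₀ R₁ → R₀ ⊆ P → R₁ ⊆ P →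
      Perfect R₀ → R₀.Nonempty → Perfect R₁ → R₁.Nonempty → Disjoint S₀ S₁ →
      Abund A R₀ S₀ → Abund A R₁ S₁ → False := by
    intro R₀ R₁ S₀ S₁ hRd hR0P hR1P hp0 hn0 hp1 hn1 hSd hA0 hA1
    apply hcon
    have hS0ne : S₀.Nonempty := by
      obtain ⟨y, _, hy⟩ := hA0 R₀ Subset.rfl hp0 hn0
      simp only [mem_iUnion, exists_prop] at hy
      exact ⟨hy.choose, hy.choose_spec.1⟩
    have hS1ne : S₁.Nonempty := by
      obtain ⟨y, _, hy⟩ := hA1 R₁ Subset.rfl hp1 hn1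
      simp only [mem_iUnion, exists_prop] at hy
      exact ⟨hy.choose, hy.choose_spec.1⟩
    have hsub : S₀ ⊆ S₁ᶜ := fun a ha h => Set.disjoint_left.mp hSd ha h
    exact ⟨S₁ᶜ, S₁, disjoint_compl_left, compl_union_self S₁, hS0ne.mono hsub, hS1ne,
      R₀, R₁, hRd, hR0P, hR1P, hp0, hn0, hp1, hn1, hA0.mono hsub, hA1⟩
  -- A perfect set Q ⊆ P avoiding A α₀.
  obtain ⟨Q, hQP, hQperf, hQne, hQA⟩ := hnull α₀ P hP hPne
  set T : Set Λ := {α₀}ᶜ with hT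
  have habT : ∀ R : Set ℝ, R ⊆ Q → Perfect R → R.Nonempty → Abund A R T := by
    intro R hRQ hRp hRn X hXR hXp hXn
    obtain ⟨x, hxX, hxB⟩ := hwitness X (hXR.trans (hRQ.trans hQP)) hXp hXn
    rw [hB] at hxB
    simp only [mem_iUnion] at hxB
    obtain ⟨α, hα⟩ := hxB
    refine ⟨x, hxX, ?_⟩
    simp only [mem_iUnion, exists_prop]
    refine ⟨α, ?_, hα⟩
    rw [hT, mem_compl_iff, mem_singleton_iff]
    intro hmem
    subst hmem
    have : x ∈ Q ∩ A α := ⟨hRQ (hXR hxX), hα⟩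
    rw [hQA] at this
    exact this
  -- Split Q into two disjoint perfect pieces.
  obtain ⟨Q₀, Q₁, ⟨hp0, hn0, hs0⟩, ⟨hp1, hn1, hs1⟩, hQd⟩ := hQperf.splitting hQne
  have pairlem : ∀ S₀ S₁ : Set Λ, Disjoint S₀ S₁ → ¬ SmallIn A Q₀ S₀ → ¬ SmallIn A Q₁ S₁ →
      False := by
    intro S₀ S₁ hd h0 h1
    rw [SmallIn] at h0 h1
    push_neg at h0 h1
    obtain ⟨X₀, hX₀, hXp0, hXn0, habX0⟩ := h0
    obtain ⟨X₁, hX₁, hXp1, hXn1, habX1⟩ := h1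
    exact key X₀ X₁ S₀ S₁ (hQd.mono hX₀ hX₁) (hX₀.trans (hs0.trans hQP))
      (hX₁.trans (hs1.trans hQP)) hXp0 hXn0 hXp1 hXn1 hd habX0 habX1
  have habQ1 : Abund A Q₁ univ := (habT Q₁ hs1 hp1 hn1).mono (subset_univ T)
  have hQ1big : ¬ SmallIn A Q₁ univ := fun hsmall => hsmall Q₁ Subset.rfl hp1 hn1 habQ1
  -- Dichotomy: for every index set, either it or its complement is small over Q₀.
  have dich : ∀ S : Set Λ, SmallIn A Q₀ S ∨ SmallIn A Q₀ Sᶜ := by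
    intro S
    by_contra hd
    push_neg at hd
    have h1 : SmallIn A Q₁ Sᶜ := by
      by_contra h
      exact pairlem S Sᶜ disjoint_compl_right hd.1 h
    have h2 : SmallIn A Q₁ S := by
      by_contra h
      exact pairlem Sᶜ S disjoint_compl_left hd.2 h
    have h3 : SmallIn A Q₁ univ := by
      have := h2.union h1
      rwa [union_compl_self] at this
    exact hQ1big h3
  -- Chosen points and the rational cut sets.
  set pt : Λ → ℝ := fun α => (hne α).choose with hpt
  have hptmem : ∀ α, pt α ∈ A α := fun α => (hne α).choose_spec
  set D : ℚ → Set Λ := fun q => {α | pt α ≤ (q : ℝ)} with hD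
  set G : ℚ → Set Λ := fun q => if SmallIn A Q₀ (D q)ᶜ then D q else (D q)ᶜ with hG
  have hGdef : ∀ q, G q = if SmallIn A Q₀ (D q)ᶜ then D q else (D q)ᶜ := fun q => rfl
  have hGsmall : ∀ q, SmallIn A Q₀ (G q)ᶜ := by
    intro q
    rw [hGdef q]
    by_cases h : SmallIn A Q₀ (D q)ᶜ
    · rw [if_pos h]; exact h
    · rw [if_neg h, compl_compl]
      rcases dich (D q) with h' | h'
      · exact h'
      · exact absurd h' h
  have hGcases : ∀ q, G q = D q ∨ G q = (D q)ᶜ := by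
    intro q
    rw [hGdef q]
    by_cases h : SmallIn A Q₀ (D q)ᶜ
    · rw [if_pos h]; left; rfl
    · rw [if_neg h]; right; rfl
  -- The exceptional set is a subsingleton.
  set E : Set Λ := {α | ∀ q, α ∈ G q} with hE
  have hEsub : E.Subsingleton := by
    have hlt : ∀ a b : Λ, a ∈ E → b ∈ E → pt a < pt b → False := by
      intro a b ha hb hab
      obtain ⟨q, hq1, hq2⟩ := exists_rat_btwn hab
      have haD : a ∈ D q := le_of_lt hq1
      have hbD : b ∉ D q := fun h => absurd h (not_le.mpr hq2)
      rcases hGcases q with h | h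
      · exact hbD (h ▸ hb q)
      · exact (h ▸ ha q) haD
    intro a ha b hb
    by_contra hne'
    have hptne : pt a ≠ pt b := by
      intro h
      have h2 : pt a ∈ A b := h ▸ hptmem b
      exact Set.disjoint_left.mp (hdisj hne') (hptmem a) h2
    rcases lt_or_gt_of_ne hptne with h | h
    · exact hlt a b ha hb h
    · exact hlt b a hb ha h
  -- The countable covering family.
  set Cfam : ℕ → Set ℝ := fun n =>
    match n with
    | 0 => ⋃ α ∈ E, A α
    | Nat.succ m => ⋃ α ∈ (G ((Denumerable.eqv ℚ).symm m))ᶜ, A α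
    with hCfam
  have hC0 : Cfam 0 = ⋃ α ∈ E, A α := rfl
  have hCs : ∀ m, Cfam (m + 1) = ⋃ α ∈ (G ((Denumerable.eqv ℚ).symm m))ᶜ, A α := fun m => rfl
  have hsm : ∀ (n : ℕ) (R : Set ℝ), R ⊆ Q₀ → Perfect R → R.Nonempty →
      ∃ R', R' ⊆ R ∧ Perfect R' ∧ R'.Nonempty ∧ R' ∩ Cfam n = ∅ := by
    intro n R hRQ hRp hRn
    match n with
    | 0 =>
      rcases E.eq_empty_or_nonempty with hEe | ⟨a, haE⟩
      · refine ⟨R, Subset.rfl, hRp, hRn, ?_⟩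
        rw [hC0]
        simp [hEe]
      · have hEeq : E = {a} := hEsub.eq_singleton_of_mem haE
        obtain ⟨R', h1, h2, h3, h4⟩ := hnull a R hRp hRn
        refine ⟨R', h1, h2, h3, ?_⟩
        rw [hC0]
        simpa [hEeq] using h4
    | Nat.succ m =>
      have hnab : ¬ Abund A R (G ((Denumerable.eqv ℚ).symm m))ᶜ :=
        hGsmall ((Denumerable.eqv ℚ).symm m) R hRQ hRp hRn
      rw [Abund] at hnab
      push_neg at hnab
      obtain ⟨X, h1, h2, h3, h4⟩ := hnab
      exact ⟨X, h1, h2, h3, h4⟩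
  -- Fusion: a perfect subset of Q₀ avoiding the whole family, hence avoiding B.
  obtain ⟨X, hXQ0, hXperf, hXne, hXavoid⟩ := fusion Q₀ Cfam hp0 hn0 hsm
  obtain ⟨x, hxX, hxB⟩ := hwitness X (hXQ0.trans (hs0.trans hQP)) hXperf hXne
  rw [hB] at hxB
  simp only [mem_iUnion] at hxB
  obtain ⟨α, hα⟩ := hxB
  by_cases hαE : α ∈ E
  · have hmem : x ∈ X ∩ Cfam 0 := ⟨hxX, by
      rw [hC0]
      exact mem_biUnion hαE hα⟩
    rw [hXavoid 0] at hmem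
    exact hmem
  · have hq : ∃ q, α ∉ G q := by
      rw [hE] at hαE
      simpa using hαE
    obtain ⟨q, hq⟩ := hq
    have hmem : x ∈ X ∩ Cfam (Denumerable.eqv ℚ q + 1) := ⟨hxX, by
      rw [hCs (Denumerable.eqv ℚ q)]
      refine mem_biUnion (show α ∈ (G ((Denumerable.eqv ℚ).symm ((Denumerable.eqv ℚ) q)))ᶜ from ?_) hα
      rw [Equiv.symm_apply_apply]
      exact hq⟩
    rw [hXavoid (Denumerable.eqv ℚ q + 1)] at hmem
    exact hmem
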